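/- arXiv:1512.00129 — 3 statements merged into one kernel-verified Lean document; each statement's English description precedes it below -/
import Mathlib

section
/- For |q|<1, (q;q)_∞² · ∑_{k=0}^∞ q^k/(q;q)_k² = (q;q)_∞ · ∑_{k=0}^∞ q^{k²+k}/(q;q)_k². (Ramanujan's false theta identity from the Lost Notebook.) -/
noncomputable def qPoch (q : ℝ) (n : ℕ) : ℝ := ∏ j ∈ Finset.range n, (1 - q ^ (j + 1))

namespace RFT

open Finset

variable {q : ℝ}

lemma qPoch_zero : qPoch q 0 = 1 := by simp [qPoch]

lemma qPoch_succ (n : ℕ) : qPoch q (n + 1) = qPoch q n * (1 - q ^ (n + 1)) := by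
  simp [qPoch, Finset.prod_range_succ]

lemma qPoch_ne (h1 : ∀ n : ℕ, 1 - q ^ (n + 1) ≠ 0) (n : ℕ) : qPoch q n ≠ 0 :=
  Finset.prod_ne_zero_iff.2 fun j _ => h1 j

lemma qPoch_add (k m : ℕ) :
    qPoch q (k + m) = qPoch q k * ∏ i ∈ Finset.range m, (1 - q ^ (k + 1) * q ^ i) := by
  rw [qPoch, Finset.prod_range_add]
  refine congrArg (qPoch q k * ·) (Finset.prod_congr rfl fun i _ => ?_)
  rw [← pow_add]
  congr 2
  omega

def tri (n : ℕ) : ℕ := ∑ i ∈ Finset.range n, i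

lemma tri_zero : tri 0 = 0 := rfl

lemma tri_succ (n : ℕ) : tri (n + 1) = tri n + n := Finset.sum_range_succ _ _

lemma tri_add (a b : ℕ) : tri (a + b) = tri a + tri b + a * b := by
  induction b with
  | zero => simp [tri_zero]
  | succ b ih =>
    rw [← Nat.add_assoc, tri_succ, tri_succ, ih]
    ring

lemma two_tri (k : ℕ) : 2 * tri k + k = k ^ 2 := by
  induction k with
  | zero => simp [tri_zero]
  | succ k ih =>
    rw [tri_succ]
    have : (k + 1) ^ 2 = k ^ 2 + 2 * k + 1 := by ring
    omega

/-- real-valued q-binomial coefficient -/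
noncomputable def Rq (q : ℝ) (n k : ℕ) : ℝ :=
  if k ≤ n then qPoch q n / (qPoch q k * qPoch q (n - k)) else 0

lemma Rq_self (h1 : ∀ n : ℕ, 1 - q ^ (n + 1) ≠ 0) (n : ℕ) : Rq q n n = 1 := by
  simp [Rq, qPoch_zero, div_self (qPoch_ne h1 n)]

lemma Rq_zero (h1 : ∀ n : ℕ, 1 - q ^ (n + 1) ≠ 0) (n : ℕ) : Rq q n 0 = 1 := by
  simp [Rq, qPoch_zero, div_self (qPoch_ne h1 n)]

lemma Rq_pascal (h1 : ∀ n : ℕ, 1 - q ^ (n + 1) ≠ 0) (j m : ℕ) (hj : j ≤ m) :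
    Rq q (m + 1) (j + 1) = Rq q m (j + 1) + q ^ (m - j) * Rq q m j := by
  rcases Nat.lt_or_ge j m with hlt | hge
  · obtain ⟨d, rfl⟩ : ∃ d, m = j + 1 + d := ⟨m - (j + 1), by omega⟩
    have e1 : j + 1 + d + 1 - (j + 1) = d + 1 := by omega
    have e2 : j + 1 + d - (j + 1) = d := by omega
    have e3 : j + 1 + d - j = d + 1 := by omega
    rw [Rq, Rq, Rq, if_pos (by omega), if_pos (by omega), if_pos (by omega), e1, e2, e3]
    have hq1 : qPoch q (j + 1 + d + 1) = qPoch q (j + 1 + d) * (1 - q ^ (j + 1 + d + 1)) :=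
      qPoch_succ _
    have hq2 : qPoch q (d + 1) = qPoch q d * (1 - q ^ (d + 1)) := qPoch_succ _
    have hq3 : qPoch q (j + 1) = qPoch q j * (1 - q ^ (j + 1)) := qPoch_succ _
    have hpw : q ^ (j + 1 + d + 1) = q ^ (d + 1) * q ^ (j + 1) := by
      rw [← pow_add]; congr 1; omega
    rw [hq1, hq2, hq3, hpw]
    have n1 := qPoch_ne h1 (j + 1 + d)
    have n2 := qPoch_ne h1 d
    have n3 := qPoch_ne h1 j
    have n4 := h1 (j + d + 1)
    have n5 := h1 d
    have n6 := h1 j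
    field_simp
    ring
  · have hjm : j = m := le_antisymm hj hge
    subst hjm
    rw [Rq_self h1, Rq, if_neg (by omega), Rq_self h1]
    simp

lemma Rq_top (m : ℕ) : Rq q m (m + 1) = 0 := by
  simp [Rq]

lemma key1 (h1 : ∀ n : ℕ, 1 - q ^ (n + 1) ≠ 0) (m : ℕ) (x : ℝ) :
    ∏ i ∈ Finset.range m, (1 - x * q ^ i)
      = ∑ k ∈ Finset.range (m + 1), (-1 : ℝ) ^ k * q ^ tri k * x ^ k * Rq q m k := by
  induction m with
  | zero => simp [Rq_zero h1, tri_zero]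
  | succ m ih =>
    rw [Finset.prod_range_succ, ih]
    rw [Finset.sum_range_succ' (fun k => (-1 : ℝ) ^ k * q ^ tri k * x ^ k * Rq q (m + 1) k)]
    have hsplit : ∀ j ∈ Finset.range (m + 1),
        (-1 : ℝ) ^ (j + 1) * q ^ tri (j + 1) * x ^ (j + 1) * Rq q (m + 1) (j + 1)
          = (-1 : ℝ) ^ (j + 1) * q ^ tri (j + 1) * x ^ (j + 1) * Rq q m (j + 1)
            + (-(x * q ^ m)) * ((-1 : ℝ) ^ j * q ^ tri j * x ^ j * Rq q m j) := by
      intro j hj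
      have hjm : j ≤ m := Nat.lt_succ_iff.mp (Finset.mem_range.mp hj)
      rw [Rq_pascal h1 j m hjm]
      have hpw : q ^ tri (j + 1) * q ^ (m - j) = q ^ tri j * q ^ m := by
        rw [← pow_add, ← pow_add]
        congr 1
        rw [tri_succ]
        omega
      have : (-1 : ℝ) ^ (j + 1) * q ^ tri (j + 1) * x ^ (j + 1) * (q ^ (m - j) * Rq q m j)
          = (-(x * q ^ m)) * ((-1 : ℝ) ^ j * q ^ tri j * x ^ j * Rq q m j) := by
        have : (-1 : ℝ) ^ (j + 1) = -(-1 : ℝ) ^ j := by rw [pow_succ]; ring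
        rw [this]
        calc -(-1 : ℝ) ^ j * q ^ tri (j + 1) * x ^ (j + 1) * (q ^ (m - j) * Rq q m j)
            = -((-1 : ℝ) ^ j * (q ^ tri (j + 1) * q ^ (m - j)) * x ^ (j + 1) * Rq q m j) := by
              ring
          _ = _ := by rw [hpw]; ring
      rw [mul_add, this]
    rw [Finset.sum_congr rfl hsplit, Finset.sum_add_distrib]
    have e1 : ∑ j ∈ Finset.range (m + 1),
        (-1 : ℝ) ^ (j + 1) * q ^ tri (j + 1) * x ^ (j + 1) * Rq q m (j + 1)
        = (∑ k ∈ Finset.range (m + 1 + 1), (-1 : ℝ) ^ k * q ^ tri k * x ^ k * Rq q m k)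
          - (-1 : ℝ) ^ 0 * q ^ tri 0 * x ^ 0 * Rq q m 0 := by
      rw [Finset.sum_range_succ' (fun k => (-1 : ℝ) ^ k * q ^ tri k * x ^ k * Rq q m k)]
      ring
    rw [e1,
      Finset.sum_range_succ (fun k => (-1 : ℝ) ^ k * q ^ tri k * x ^ k * Rq q m k) (m + 1),
      Rq_top, Rq_zero h1, Rq_zero h1, ← Finset.mul_sum]
    simp only [tri_zero, pow_zero, mul_one, one_mul, mul_zero, add_zero]
    ring

lemma key2 (h1 : ∀ n : ℕ, 1 - q ^ (n + 1) ≠ 0) (m : ℕ) (hm : 1 ≤ m) :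
    ∑ k ∈ Finset.range (m + 1), (-1 : ℝ) ^ k * q ^ tri k * Rq q m k = 0 := by
  have := key1 h1 m 1
  simp only [one_pow, mul_one, one_mul] at this
  rw [← this]
  apply Finset.prod_eq_zero (Finset.mem_range.mpr hm)
  simp

lemma chooseMul (h1 : ∀ n : ℕ, 1 - q ^ (n + 1) ≠ 0) {k m N : ℕ} (hk : k ≤ m) (hm : m ≤ N) :
    Rq q N m * Rq q m k = Rq q N k * Rq q (N - k) (m - k) := by
  have e1 : N - k - (m - k) = N - m := by omega
  rw [Rq, Rq, Rq, Rq, if_pos hm, if_pos hk, if_pos (by omega : k ≤ N),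
    if_pos (by omega : m - k ≤ N - k), e1]
  have n1 := qPoch_ne h1 m
  have n2 := qPoch_ne h1 k
  have n3 := qPoch_ne h1 (N - m)
  have n4 := qPoch_ne h1 (m - k)
  have n5 := qPoch_ne h1 (N - k)
  field_simp

lemma triangle_sum (f : ℕ → ℕ → ℝ) (n : ℕ) :
    ∑ k ∈ Finset.range n, ∑ j ∈ Finset.range (n - k), f k j
      = ∑ m ∈ Finset.range n, ∑ k ∈ Finset.range (m + 1), f k (m - k) := by
  induction n with
  | zero => simp
  | succ n ih =>
    rw [Finset.sum_range_succ (fun m => ∑ k ∈ Finset.range (m + 1), f k (m - k))]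
    rw [← ih]
    rw [Finset.sum_range_succ (fun k => ∑ j ∈ Finset.range (n + 1 - k), f k j)]
    have e0 : n + 1 - n = 1 := by omega
    have hinner : ∀ k ∈ Finset.range n,
        ∑ j ∈ Finset.range (n + 1 - k), f k j
          = (∑ j ∈ Finset.range (n - k), f k j) + f k (n - k) := by
      intro k hk
      have hkn : k < n := Finset.mem_range.mp hk
      have : n + 1 - k = (n - k) + 1 := by omega
      rw [this, Finset.sum_range_succ]
    rw [Finset.sum_congr rfl hinner, Finset.sum_add_distrib, e0]
    rw [Finset.sum_range_succ (fun k => f k (n - k))]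
    simp [add_assoc]


lemma expo {k m : ℕ} (hk : k ≤ m) :
    k ^ 2 + tri (m - k) + (k + 1) * (m - k) = tri (m + 1) + tri k := by
  obtain ⟨d, rfl⟩ : ∃ d, m = k + d := ⟨m - k, by omega⟩
  have e1 : k + d - k = d := by omega
  have e2 : k + d + 1 = k + (d + 1) := by omega
  rw [e1, e2, tri_add k (d + 1), tri_succ d, ← two_tri k]
  have h3 : (k + 1) * d = k * d + d := by ring
  have h4 : k * (d + 1) = k * d + k := by ring
  rw [h3, h4]
  linarith

lemma sign_split {k m : ℕ} (hk : k ≤ m) :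
    ((-1 : ℝ)) ^ (m - k) = (-1) ^ m * (-1) ^ k := by
  have : (-1 : ℝ) ^ m * (-1) ^ k = (-1) ^ (m + k) := by rw [pow_add]
  rw [this]
  have h2 : m + k = (m - k) + 2 * k := by omega
  rw [h2, pow_add, pow_mul]
  norm_num

lemma keyD (h1 : ∀ n : ℕ, 1 - q ^ (n + 1) ≠ 0) (N : ℕ) :
    ∑ k ∈ Finset.range (N + 1), q ^ (k ^ 2) * (Rq q N k * (qPoch q N / qPoch q k)) = 1 := by
  set G : ℕ → ℕ → ℝ := fun k j =>
    q ^ (k ^ 2) * Rq q N k * ((-1 : ℝ) ^ j * q ^ tri j * (q ^ (k + 1)) ^ j * Rq q (N - k) j)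
    with hG
  have hstep : ∀ k ∈ Finset.range (N + 1),
      q ^ (k ^ 2) * (Rq q N k * (qPoch q N / qPoch q k))
        = ∑ j ∈ Finset.range (N + 1 - k), G k j := by
    intro k hk
    have hkN : k ≤ N := Nat.lt_succ_iff.mp (Finset.mem_range.mp hk)
    have hdiv : qPoch q N / qPoch q k
        = ∏ i ∈ Finset.range (N - k), (1 - q ^ (k + 1) * q ^ i) := by
      have := qPoch_add (q := q) k (N - k)
      rw [Nat.add_sub_cancel' hkN] at this
      rw [this, mul_comm, mul_div_assoc, div_self (qPoch_ne h1 k), mul_one]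
    have hr : N + 1 - k = (N - k) + 1 := by omega
    rw [hdiv, key1 h1 (N - k) (q ^ (k + 1)), hr, Finset.mul_sum, Finset.mul_sum]
    refine Finset.sum_congr rfl fun j _ => ?_
    simp only [hG]
    ring
  rw [Finset.sum_congr rfl hstep, triangle_sum G (N + 1)]
  have hinner : ∀ m ∈ Finset.range (N + 1),
      ∑ k ∈ Finset.range (m + 1), G k (m - k)
        = if m = 0 then 1 else 0 := by
    intro m hm
    have hmN : m ≤ N := Nat.lt_succ_iff.mp (Finset.mem_range.mp hm)
    have hterm : ∀ k ∈ Finset.range (m + 1),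
        G k (m - k) = ((-1 : ℝ) ^ m * q ^ tri (m + 1) * Rq q N m)
          * ((-1 : ℝ) ^ k * q ^ tri k * Rq q m k) := by
      intro k hk
      have hkm : k ≤ m := Nat.lt_succ_iff.mp (Finset.mem_range.mp hk)
      rw [hG]
      simp only []
      rw [sign_split hkm]
      have hq : q ^ (k ^ 2) * (q ^ tri (m - k) * (q ^ (k + 1)) ^ (m - k))
          = q ^ tri (m + 1) * q ^ tri k := by
        rw [← pow_mul, ← pow_add, ← pow_add, ← add_assoc, expo hkm, pow_add]
      have hR : Rq q N k * Rq q (N - k) (m - k) = Rq q N m * Rq q m k :=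
        (chooseMul h1 hkm hmN).symm
      calc q ^ k ^ 2 * Rq q N k *
            ((-1 : ℝ) ^ m * (-1) ^ k * q ^ tri (m - k) * (q ^ (k + 1)) ^ (m - k)
              * Rq q (N - k) (m - k))
          = (q ^ (k ^ 2) * (q ^ tri (m - k) * (q ^ (k + 1)) ^ (m - k)))
            * ((-1 : ℝ) ^ m * (-1) ^ k) * (Rq q N k * Rq q (N - k) (m - k)) := by ring
        _ = (q ^ tri (m + 1) * q ^ tri k) * ((-1 : ℝ) ^ m * (-1) ^ k)
            * (Rq q N m * Rq q m k) := by rw [hq, hR]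
        _ = _ := by ring
    rw [Finset.sum_congr rfl hterm, ← Finset.mul_sum]
    rcases Nat.eq_zero_or_pos m with rfl | hm1
    · simp [Rq_zero h1, tri_succ, tri_zero]
    · rw [key2 h1 m hm1, mul_zero, if_neg (by omega)]
  rw [Finset.sum_congr rfl hinner]
  simp

lemma keyD2 (h1 : ∀ n : ℕ, 1 - q ^ (n + 1) ≠ 0) (N : ℕ) :
    ∑ k ∈ Finset.range (N + 1), q ^ (k ^ 2) / (qPoch q k ^ 2 * qPoch q (N - k))
      = 1 / qPoch q N ^ 2 := by
  have h := keyD h1 N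
  have hterm : ∀ k ∈ Finset.range (N + 1),
      q ^ (k ^ 2) * (Rq q N k * (qPoch q N / qPoch q k))
        = qPoch q N ^ 2 * (q ^ (k ^ 2) / (qPoch q k ^ 2 * qPoch q (N - k))) := by
    intro k hk
    have hkN : k ≤ N := Nat.lt_succ_iff.mp (Finset.mem_range.mp hk)
    rw [Rq, if_pos hkN]
    have n1 := qPoch_ne h1 N
    have n2 := qPoch_ne h1 k
    have n3 := qPoch_ne h1 (N - k)
    field_simp
  rw [Finset.sum_congr rfl hterm, ← Finset.mul_sum] at h
  rw [mul_comm] at h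
  exact eq_one_div_of_mul_eq_one_left h

lemma star (h1 : ∀ n : ℕ, 1 - q ^ (n + 1) ≠ 0) (N : ℕ) :
    ∑ k ∈ Finset.range (N + 1), q ^ k / qPoch q k ^ 2
      = ∑ k ∈ Finset.range (N + 1), q ^ (k ^ 2 + k) / (qPoch q k ^ 2 * qPoch q (N - k)) := by
  induction N with
  | zero => simp [qPoch_zero]
  | succ N ih =>
    have hsplit : ∀ k ∈ Finset.range (N + 1 + 1),
        q ^ (k ^ 2 + k) / (qPoch q k ^ 2 * qPoch q (N + 1 - k))
          = (if k ≤ N then q ^ (k ^ 2 + k) / (qPoch q k ^ 2 * qPoch q (N - k)) else 0)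
            + q ^ (N + 1) * (q ^ (k ^ 2) / (qPoch q k ^ 2 * qPoch q (N + 1 - k))) := by
      intro k hk
      have hk2 : k < N + 2 := Finset.mem_range.mp hk
      rcases le_or_gt k N with hkN | hkN
      · rw [if_pos hkN]
        obtain ⟨d, rfl⟩ : ∃ d, N = k + d := ⟨N - k, by omega⟩
        have e1 : k + d + 1 - k = d + 1 := by omega
        have e2 : k + d - k = d := by omega
        rw [e1, e2, qPoch_succ d]
        have n2 := qPoch_ne h1 k
        have n3 := qPoch_ne h1 d
        have n4 := h1 d
        field_simp
        ring
      · have hk1 : k = N + 1 := by omega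
        subst hk1
        rw [if_neg (by omega), Nat.sub_self, qPoch_zero, zero_add]
        have n2 := qPoch_ne h1 (N + 1)
        field_simp
        ring
    rw [Finset.sum_congr rfl hsplit, Finset.sum_add_distrib, ← Finset.mul_sum,
      keyD2 h1 (N + 1)]
    have hfirst : (∑ k ∈ Finset.range (N + 1 + 1),
        if k ≤ N then q ^ (k ^ 2 + k) / (qPoch q k ^ 2 * qPoch q (N - k)) else 0)
        = ∑ k ∈ Finset.range (N + 1), q ^ (k ^ 2 + k) / (qPoch q k ^ 2 * qPoch q (N - k)) := by
      rw [Finset.sum_range_succ, if_neg (by omega), add_zero]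
      refine Finset.sum_congr rfl fun k hk => ?_
      rw [if_pos (Nat.lt_succ_iff.mp (Finset.mem_range.mp hk))]
    rw [hfirst, ← ih, Finset.sum_range_succ]
    ring

section Analytic

open Real Filter

lemma factor_pos (hq : |q| < 1) (n : ℕ) : 0 < 1 - q ^ (n + 1) := by
  have h : |q ^ (n + 1)| < 1 := by
    rw [abs_pow]
    exact pow_lt_one₀ (abs_nonneg q) hq n.succ_ne_zero
  have := (abs_lt.mp h).2
  linarith

lemma h1_of (hq : |q| < 1) : ∀ n : ℕ, 1 - q ^ (n + 1) ≠ 0 := fun n => (factor_pos hq n).ne'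

lemma one_sub_ge_exp (hq : |q| < 1) {t : ℝ} (ht : 0 ≤ t) (hta : t ≤ |q|) :
    Real.exp (-(t / (1 - |q|))) ≤ 1 - t := by
  have h1a : 0 < 1 - |q| := by linarith
  have h1t : 0 < 1 - t := by linarith
  have key : 1 / (1 - t) ≤ Real.exp (t / (1 - |q|)) := by
    have e1 : t / (1 - t) ≤ t / (1 - |q|) :=
      div_le_div_of_nonneg_left ht h1a (by linarith)
    have e3 : 1 / (1 - t) = t / (1 - t) + 1 := by field_simp; ring
    calc 1 / (1 - t) = t / (1 - t) + 1 := e3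
      _ ≤ Real.exp (t / (1 - t)) := Real.add_one_le_exp _
      _ ≤ Real.exp (t / (1 - |q|)) := Real.exp_le_exp.mpr e1
  rw [Real.exp_neg]
  rw [inv_le_comm₀ (Real.exp_pos _) h1t, inv_eq_one_div]
  exact key

lemma abs_qPoch_lower (hq : |q| < 1) (n : ℕ) :
    Real.exp (-(|q| / (1 - |q|) ^ 2)) ≤ |qPoch q n| := by
  have ha : (0 : ℝ) ≤ |q| := abs_nonneg q
  have h1a : (0 : ℝ) < 1 - |q| := by linarith
  have step1 : ∏ j ∈ Finset.range n, (1 - |q| ^ (j + 1)) ≤ |qPoch q n| := by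
    rw [qPoch, Finset.abs_prod]
    refine Finset.prod_le_prod (fun j _ => ?_) (fun j _ => ?_)
    · have : |q| ^ (j + 1) ≤ 1 := pow_le_one₀ ha hq.le
      linarith
    · have h2 := abs_sub_abs_le_abs_sub (1 : ℝ) (q ^ (j + 1))
      rw [abs_one, abs_pow] at h2
      exact h2
  have step2 : Real.exp (-(|q| / (1 - |q|) ^ 2))
      ≤ ∏ j ∈ Finset.range n, (1 - |q| ^ (j + 1)) := by
    have hg : ∑ j ∈ Finset.range n, |q| ^ (j + 1) ≤ |q| / (1 - |q|) := by
      have e : ∑ j ∈ Finset.range n, |q| ^ (j + 1) = |q| * ∑ j ∈ Finset.range n, |q| ^ j := by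
        rw [Finset.mul_sum]
        exact Finset.sum_congr rfl fun j _ => by ring
      have hg2 : ∑ j ∈ Finset.range n, |q| ^ j ≤ (1 - |q|)⁻¹ :=
        le_trans (Summable.sum_le_tsum _ (fun i _ => pow_nonneg ha i) (summable_geometric_of_lt_one ha hq))
          (tsum_geometric_of_lt_one ha hq).le
      rw [e, div_eq_mul_inv]
      exact mul_le_mul_of_nonneg_left hg2 ha
    have hs : ∑ j ∈ Finset.range n, |q| ^ (j + 1) / (1 - |q|) ≤ |q| / (1 - |q|) ^ 2 := by
      rw [← Finset.sum_div]
      calc (∑ j ∈ Finset.range n, |q| ^ (j + 1)) / (1 - |q|)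
          ≤ (|q| / (1 - |q|)) / (1 - |q|) := (div_le_div_iff_of_pos_right h1a).mpr hg
        _ = |q| / (1 - |q|) ^ 2 := by rw [div_div, sq]
    calc Real.exp (-(|q| / (1 - |q|) ^ 2))
        ≤ Real.exp (-(∑ j ∈ Finset.range n, |q| ^ (j + 1) / (1 - |q|))) :=
          Real.exp_le_exp.mpr (neg_le_neg hs)
      _ = ∏ j ∈ Finset.range n, Real.exp (-(|q| ^ (j + 1) / (1 - |q|))) := by
          rw [← Real.exp_sum]
          congr 1
          rw [← Finset.sum_neg_distrib]
      _ ≤ ∏ j ∈ Finset.range n, (1 - |q| ^ (j + 1)) := by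
          refine Finset.prod_le_prod (fun j _ => (Real.exp_pos _).le) (fun j _ => ?_)
          refine one_sub_ge_exp hq (pow_nonneg ha _) ?_
          calc |q| ^ (j + 1) ≤ |q| ^ 1 := pow_le_pow_of_le_one ha hq.le (by omega)
            _ = |q| := pow_one _
  exact step2.trans step1

lemma summable_log (hq : |q| < 1) : Summable fun n : ℕ => Real.log (1 - q ^ (n + 1)) := by
  have ha : (0 : ℝ) ≤ |q| := abs_nonneg q
  have h1a : (0 : ℝ) < 1 - |q| := by linarith
  have hsum : Summable fun n : ℕ => |q| ^ (n + 1) / (1 - |q|) := by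
    refine ((summable_geometric_of_lt_one ha hq).mul_left (|q| * (1 - |q|)⁻¹)).congr fun n => ?_
    rw [div_eq_mul_inv]
    ring
  refine Summable.of_norm_bounded hsum fun n => ?_
  have hx : |q ^ (n + 1)| < 1 := by
    rw [abs_pow]
    exact pow_lt_one₀ ha hq n.succ_ne_zero
  have h0 := abs_log_sub_add_sum_range_le hx 0
  simp only [Finset.range_zero, Finset.sum_empty, zero_add, pow_one] at h0
  rw [Real.norm_eq_abs]
  refine h0.trans ?_
  have hle : |q ^ (n + 1)| ≤ |q| := by
    rw [abs_pow]
    calc |q| ^ (n + 1) ≤ |q| ^ 1 := pow_le_pow_of_le_one ha hq.le (by omega)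
      _ = |q| := pow_one _
  refine div_le_div₀ (pow_nonneg ha _) (le_of_eq (abs_pow q (n+1))) h1a (by linarith)

lemma multipliable_one_sub (hq : |q| < 1) : Multipliable fun n : ℕ => 1 - q ^ (n + 1) :=
  Real.multipliable_of_summable_log (fun n => factor_pos hq n) (summable_log hq)

lemma abs_inv_qPoch_le (hq : |q| < 1) (n : ℕ) :
    |qPoch q n|⁻¹ ≤ Real.exp (|q| / (1 - |q|) ^ 2) := by
  have h := abs_qPoch_lower hq n
  calc |qPoch q n|⁻¹ ≤ (Real.exp (-(|q| / (1 - |q|) ^ 2)))⁻¹ :=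
        inv_anti₀ (Real.exp_pos _) h
    _ = Real.exp (|q| / (1 - |q|) ^ 2) := by rw [Real.exp_neg, inv_inv]

lemma abs_term_le (hq : |q| < 1) (e : ℕ) (n m : ℕ) :
    |q ^ e / (qPoch q n ^ 2 * qPoch q m)|
      ≤ |q| ^ e * Real.exp (|q| / (1 - |q|) ^ 2) ^ 3 := by
  set cE := Real.exp (|q| / (1 - |q|) ^ 2) with hcE
  have hcE0 : 0 ≤ cE := (Real.exp_pos _).le
  have hn := abs_inv_qPoch_le hq n
  have hm := abs_inv_qPoch_le hq m
  have hn0 : (0:ℝ) ≤ |qPoch q n|⁻¹ := inv_nonneg.mpr (abs_nonneg _)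
  have hm0 : (0:ℝ) ≤ |qPoch q m|⁻¹ := inv_nonneg.mpr (abs_nonneg _)
  rw [abs_div, abs_mul, abs_pow, abs_pow, div_eq_mul_inv, mul_inv, ← inv_pow]
  have h2 : |qPoch q n|⁻¹ ^ 2 * |qPoch q m|⁻¹ ≤ cE ^ 2 * cE := by
    refine mul_le_mul (pow_le_pow_left₀ hn0 hn 2) hm hm0 (pow_nonneg hcE0 2)
  calc |q| ^ e * (|qPoch q n|⁻¹ ^ 2 * |qPoch q m|⁻¹)
      ≤ |q| ^ e * (cE ^ 2 * cE) :=
        mul_le_mul_of_nonneg_left h2 (pow_nonneg (abs_nonneg q) e)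
    _ = |q| ^ e * cE ^ 3 := by ring

lemma summable_aux (hq : |q| < 1) (E : ℕ → ℕ) (hE : ∀ k, k ≤ E k) :
    Summable fun k : ℕ => q ^ E k / qPoch q k ^ 2 := by
  set cE := Real.exp (|q| / (1 - |q|) ^ 2) with hcE
  have hb : Summable fun k : ℕ => |q| ^ k * cE ^ 3 :=
    (summable_geometric_of_lt_one (abs_nonneg q) hq).mul_right _
  refine Summable.of_norm_bounded hb fun k => ?_
  have h1 : |q ^ E k / (qPoch q k ^ 2 * qPoch q 0)| ≤ |q| ^ E k * cE ^ 3 :=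
    abs_term_le hq (E k) k 0
  rw [qPoch_zero, mul_one] at h1
  rw [Real.norm_eq_abs]
  refine h1.trans ?_
  refine mul_le_mul_of_nonneg_right ?_ (pow_nonneg (Real.exp_pos _).le 3)
  exact pow_le_pow_of_le_one (abs_nonneg q) hq.le (hE k)

end Analytic

end RFT

open Filter Topology RFT

theorem ramanujan_false_theta (q : ℝ) (hq : |q| < 1) :
    (∏' j : ℕ, (1 - q ^ (j + 1))) ^ 2 * ∑' k : ℕ, q ^ k / (qPoch q k) ^ 2
      = (∏' j : ℕ, (1 - q ^ (j + 1))) * ∑' k : ℕ, q ^ (k ^ 2 + k) / (qPoch q k) ^ 2 := by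
  have h1 := h1_of hq
  set Pinf := ∏' j : ℕ, (1 - q ^ (j + 1)) with hPdef
  have hM := multipliable_one_sub hq
  have hTP : Tendsto (fun N => qPoch q N) atTop (𝓝 Pinf) := hM.hasProd.tendsto_prod_nat
  have hPinf_ne : Pinf ≠ 0 := by
    intro h0
    have habs : Tendsto (fun N => |qPoch q N|) atTop (𝓝 |Pinf|) := hTP.abs
    have hle : Real.exp (-(|q| / (1 - |q|) ^ 2)) ≤ |Pinf| :=
      ge_of_tendsto habs (Eventually.of_forall (abs_qPoch_lower hq))
    rw [h0, abs_zero] at hle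
    exact absurd hle (not_le.mpr (Real.exp_pos _))
  have hfsum : Summable fun k : ℕ => q ^ k / qPoch q k ^ 2 :=
    summable_aux hq (fun k => k) fun k => le_rfl
  set A := ∑' k : ℕ, q ^ k / qPoch q k ^ 2 with hAdef
  set F : ℕ → ℕ → ℝ := fun N k =>
    if k ≤ N then q ^ (k ^ 2 + k) / (qPoch q k ^ 2 * qPoch q (N - k)) else 0 with hF
  set g : ℕ → ℝ := fun k => q ^ (k ^ 2 + k) / (qPoch q k ^ 2 * Pinf) with hg
  have hFg : Tendsto (fun N => ∑' k, F N k) atTop (𝓝 (∑' k, g k)) := by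
    apply tendsto_tsum_of_dominated_convergence
      (bound := fun k : ℕ => |q| ^ k * Real.exp (|q| / (1 - |q|) ^ 2) ^ 3)
    · exact (summable_geometric_of_lt_one (abs_nonneg q) hq).mul_right _
    · intro k
      have hne : qPoch q k ^ 2 * Pinf ≠ 0 :=
        mul_ne_zero (pow_ne_zero 2 (qPoch_ne h1 k)) hPinf_ne
      have h₁ : Tendsto (fun N : ℕ => qPoch q (N - k)) atTop (𝓝 Pinf) :=
        hTP.comp (tendsto_sub_atTop_nat k)
      have h₂ : Tendsto (fun N : ℕ => q ^ (k ^ 2 + k) / (qPoch q k ^ 2 * qPoch q (N - k)))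
          atTop (𝓝 (g k)) := by
        rw [hg]
        exact tendsto_const_nhds.div (tendsto_const_nhds.mul h₁) hne
      refine h₂.congr' ?_
      filter_upwards [eventually_ge_atTop k] with N hN
      rw [hF]
      simp only [if_pos hN]
    · refine Eventually.of_forall fun N k => ?_
      rw [hF]
      dsimp only
      split_ifs with h
      · rw [Real.norm_eq_abs]
        refine (abs_term_le hq (k ^ 2 + k) k (N - k)).trans ?_
        refine mul_le_mul_of_nonneg_right ?_ (pow_nonneg (Real.exp_pos _).le 3)
        exact pow_le_pow_of_le_one (abs_nonneg q) hq.le (Nat.le_add_left k (k ^ 2))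
      · rw [norm_zero]
        positivity
  have hFA : ∀ N, ∑' k, F N k = ∑ k ∈ Finset.range (N + 1), q ^ k / qPoch q k ^ 2 := by
    intro N
    rw [tsum_eq_sum (s := Finset.range (N + 1))
      (fun b hb => by rw [hF]; exact if_neg (by simpa using Finset.mem_range.not.mp hb))]
    rw [star h1 N]
    refine Finset.sum_congr rfl fun k hk => ?_
    rw [hF]
    exact if_pos (Nat.lt_succ_iff.mp (Finset.mem_range.mp hk))
  have hA : Tendsto (fun N => ∑ k ∈ Finset.range (N + 1), q ^ k / qPoch q k ^ 2)
      atTop (𝓝 A) :=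
    hfsum.hasSum.tendsto_sum_nat.comp (tendsto_add_atTop_nat 1)
  have hAg : A = ∑' k, g k := tendsto_nhds_unique (hFg.congr hFA) hA |>.symm
  have hB : ∑' k : ℕ, q ^ (k ^ 2 + k) / qPoch q k ^ 2 = Pinf * A := by
    rw [hAg, ← tsum_mul_left]
    refine tsum_congr fun k => ?_
    rw [hg]
    dsimp only
    have hk := qPoch_ne h1 k
    field_simp
  rw [hB]
  ring
end

section
/- For |q|<1, ∑_{k=0}^∞ (-1)^k q^{k(k+1)/2} = (q;q)_∞² · ∑_{k=0}^∞ q^k/(q;q)_k². -/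
namespace FTaux

def tri (m : ℕ) : ℕ := m * (m + 1) / 2

lemma tri_succ (m : ℕ) : tri (m + 1) = tri m + (m + 1) := by
  unfold tri
  have h : (m + 1) * (m + 1 + 1) = m * (m + 1) + (m + 1) * 2 := by ring
  rw [h, Nat.add_mul_div_right _ _ (by norm_num : (0:ℕ) < 2)]

lemma le_tri (m : ℕ) : m ≤ tri m := by
  unfold tri
  rcases Nat.eq_zero_or_pos m with h | h
  · simp [h]
  · rw [Nat.le_div_iff_mul_le (by norm_num)]
    nlinarith

variable {q : ℝ}

lemma one_sub_pos (hq : |q| < 1) (n : ℕ) : 0 < 1 - q ^ (n + 1) := by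
  have h1 : |q ^ (n + 1)| < 1 := by
    rw [abs_pow]; exact pow_lt_one₀ (abs_nonneg q) hq (Nat.succ_ne_zero n)
  have := abs_lt.mp h1
  linarith [this.2]

lemma qPoch_pos (hq : |q| < 1) (n : ℕ) : 0 < qPoch q n := by
  unfold qPoch
  exact Finset.prod_pos fun j _ => one_sub_pos hq j

lemma log_bound (hq : |q| < 1) {x : ℝ} (hx : |x| ≤ |q|) : |Real.log (1 - x)| ≤ |x| / (1 - |q|) := by
  have hq1 : 0 < 1 - |q| := by linarith
  have hx1 : |x| < 1 := lt_of_le_of_lt hx hq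
  have hpos : 0 < 1 - x := by have := abs_lt.mp hx1; linarith [this.2]
  have hxx := abs_lt.mp hx1
  rcases le_or_gt x 0 with h | h
  · -- log (1-x) ≥ 0, log(1-x) ≤ -x = |x|
    have h0 : 0 ≤ Real.log (1 - x) := Real.log_nonneg (by linarith)
    have h1 : Real.log (1 - x) ≤ (1 - x) - 1 := Real.log_le_sub_one_of_pos hpos
    rw [abs_of_nonneg h0]
    have : |x| = -x := abs_of_nonpos h
    rw [this]
    have : -x ≤ -x / (1 - |q|) := by
      rw [le_div_iff₀ hq1]
      nlinarith [neg_nonneg.mpr h]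
    linarith
  · -- 0 < x, -log(1-x) = log((1-x)⁻¹) ≤ x/(1-x) ≤ x/(1-|q|)
    have h0 : Real.log (1 - x) ≤ 0 := by
      apply Real.log_nonpos <;> linarith
    rw [abs_of_nonpos h0, abs_of_pos h]
    have h1 : Real.log (1 - x)⁻¹ ≤ (1 - x)⁻¹ - 1 :=
      Real.log_le_sub_one_of_pos (by positivity)
    rw [Real.log_inv] at h1
    have h2 : (1 - x)⁻¹ - 1 = x / (1 - x) := by field_simp; ring
    have h3 : x / (1 - x) ≤ x / (1 - |q|) := by
      apply div_le_div_of_nonneg_left h.le hq1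
      have : x ≤ |q| := le_trans (le_abs_self x) hx
      linarith
    linarith


lemma geom_partial_le (hq : |q| < 1) (n : ℕ) :
    ∑ j ∈ Finset.range n, |q| ^ (j + 1) ≤ |q| / (1 - |q|) := by
  have hq0 : (0:ℝ) ≤ |q| := abs_nonneg q
  have hsum : Summable (fun j : ℕ => |q| ^ j) := summable_geometric_of_lt_one hq0 hq
  have h1 : ∑ j ∈ Finset.range n, |q| ^ (j + 1) = |q| * ∑ j ∈ Finset.range n, |q| ^ j := by
    rw [Finset.mul_sum]; exact Finset.sum_congr rfl fun j _ => by ring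
  rw [h1, div_eq_mul_inv]
  apply mul_le_mul_of_nonneg_left _ hq0
  calc ∑ j ∈ Finset.range n, |q| ^ j ≤ ∑' j : ℕ, |q| ^ j :=
        Summable.sum_le_tsum _ (fun j _ => by positivity) hsum
    _ = (1 - |q|)⁻¹ := tsum_geometric_of_lt_one hq0 hq

lemma abs_log_qPoch_le (hq : |q| < 1) (n : ℕ) :
    |Real.log (qPoch q n)| ≤ |q| / ((1 - |q|) * (1 - |q|)) := by
  have hq1 : (0:ℝ) < 1 - |q| := by linarith [abs_nonneg q]
  have hlog : Real.log (qPoch q n) = ∑ j ∈ Finset.range n, Real.log (1 - q ^ (j + 1)) := by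
    unfold qPoch
    exact Real.log_prod fun j _ => ne_of_gt (one_sub_pos hq j)
  rw [hlog]
  calc |∑ j ∈ Finset.range n, Real.log (1 - q ^ (j + 1))|
      ≤ ∑ j ∈ Finset.range n, |Real.log (1 - q ^ (j + 1))| := Finset.abs_sum_le_sum_abs _ _
    _ ≤ ∑ j ∈ Finset.range n, |q| ^ (j + 1) / (1 - |q|) := by
        apply Finset.sum_le_sum
        intro j _
        have h := log_bound hq (x := q ^ (j + 1)) (by
          rw [abs_pow]
          calc |q| ^ (j + 1) ≤ |q| ^ 1 :=
                pow_le_pow_of_le_one (abs_nonneg q) hq.le (by omega)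
            _ = |q| := pow_one _)
        rwa [abs_pow] at h
    _ = (∑ j ∈ Finset.range n, |q| ^ (j + 1)) / (1 - |q|) := by rw [Finset.sum_div]
    _ ≤ (|q| / (1 - |q|)) / (1 - |q|) := by
        gcongr
        exact geom_partial_le hq n
    _ = |q| / ((1 - |q|) * (1 - |q|)) := by rw [div_div]


/-- uniform bound for 1/qPoch -/
noncomputable def B (q : ℝ) : ℝ := Real.exp (|q| / ((1 - |q|) * (1 - |q|)))

lemma B_pos (q : ℝ) : 0 < B q := Real.exp_pos _

lemma qPoch_ge (hq : |q| < 1) (n : ℕ) : (B q)⁻¹ ≤ qPoch q n := by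
  have hp := qPoch_pos hq n
  have h := abs_log_qPoch_le hq n
  have h1 : -(|q| / ((1 - |q|) * (1 - |q|))) ≤ Real.log (qPoch q n) := by
    have := abs_le.mp h; linarith [this.1]
  have h2 := Real.exp_le_exp.mpr h1
  rwa [Real.exp_log hp, Real.exp_neg] at h2

lemma inv_qPoch_le (hq : |q| < 1) (n : ℕ) : (qPoch q n)⁻¹ ≤ B q := by
  have hp := qPoch_pos hq n
  have := qPoch_ge hq n
  rw [inv_le_comm₀ hp (B_pos q)] at *
  exact this

/-- the Euler-type series g -/
noncomputable def gg (q : ℝ) (k : ℕ) : ℝ :=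
  ∑' m : ℕ, (-1) ^ m * q ^ (tri m + k * m) / qPoch q m

noncomputable def ff (q : ℝ) (k : ℕ) : ℝ :=
  ∑' n : ℕ, q ^ ((k + 1) * n) / qPoch q n

lemma term_abs_le (hq : |q| < 1) (m e t : ℕ) (he : t ≤ e) (s : ℝ) (hs : |s| = 1) :
    |s * q ^ e / qPoch q m| ≤ B q * |q| ^ t := by
  have hp := qPoch_pos hq m
  rw [abs_div, abs_mul, hs, one_mul, abs_of_pos hp, div_eq_mul_inv, abs_pow]
  rw [mul_comm]
  apply mul_le_mul (inv_qPoch_le hq m) (pow_le_pow_of_le_one (abs_nonneg q) hq.le he)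
    (by positivity) (B_pos q).le

lemma summable_geom_mul (hq : |q| < 1) (c : ℝ) : Summable (fun m : ℕ => c * |q| ^ m) :=
  (summable_geometric_of_lt_one (abs_nonneg q) hq).mul_left c

lemma summable_of_term_le (hq : |q| < 1) {a : ℕ → ℝ} {c : ℝ}
    (h : ∀ m, |a m| ≤ c * |q| ^ m) : Summable a := by
  apply Summable.of_norm
  simp only [Real.norm_eq_abs]
  exact Summable.of_nonneg_of_le (fun m => abs_nonneg _) h (summable_geom_mul hq c)

lemma summable_u (hq : |q| < 1) (k : ℕ) :
    Summable (fun m : ℕ => (-1) ^ m * q ^ (tri m + k * m) / qPoch q m) := by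
  apply summable_of_term_le hq (c := B q)
  intro m
  exact term_abs_le hq m _ m (le_trans (le_tri m) (Nat.le_add_right _ _)) _ (by
    rw [abs_pow, abs_neg, abs_one, one_pow])

lemma summable_v (hq : |q| < 1) (k : ℕ) :
    Summable (fun n : ℕ => q ^ ((k + 1) * n) / qPoch q n) := by
  apply summable_of_term_le hq (c := B q)
  intro n
  have : q ^ ((k + 1) * n) / qPoch q n = 1 * q ^ ((k + 1) * n) / qPoch q n := by ring
  rw [this]
  exact term_abs_le hq n _ n (by nlinarith [Nat.le_refl n]) 1 (abs_one)


lemma tsum_abs_le (hq : |q| < 1) {a : ℕ → ℝ} {c : ℝ} (hc : 0 ≤ c)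
    (h : ∀ m, |a m| ≤ c * |q| ^ m) : |∑' m, a m| ≤ c / (1 - |q|) := by
  have hsa : Summable a := summable_of_term_le hq h
  have habs : Summable (fun m => |a m|) :=
    Summable.of_nonneg_of_le (fun m => abs_nonneg _) h (summable_geom_mul hq c)
  have hnorm : Summable (fun m => ‖a m‖) := by
    simp only [Real.norm_eq_abs]; exact habs
  have h1 : ‖∑' m, a m‖ ≤ ∑' m, ‖a m‖ := norm_tsum_le_tsum_norm hnorm
  simp only [Real.norm_eq_abs] at h1
  calc |∑' m, a m| ≤ ∑' m, |a m| := h1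
    _ ≤ ∑' m : ℕ, c * |q| ^ m := Summable.tsum_le_tsum h habs (summable_geom_mul hq c)
    _ = c * (1 - |q|)⁻¹ := by
        rw [tsum_mul_left, tsum_geometric_of_lt_one (abs_nonneg q) hq]
    _ = c / (1 - |q|) := by rw [div_eq_mul_inv]

lemma gg_sub_one (hq : |q| < 1) (k : ℕ) :
    |gg q k - 1| ≤ B q * |q| ^ (k + 1) / (1 - |q|) := by
  have hs := summable_u hq k
  have h0 : (-1 : ℝ) ^ 0 * q ^ (tri 0 + k * 0) / qPoch q 0 = 1 := by
    simp [tri, qPoch]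
  have hsplit : gg q k - 1 = ∑' m : ℕ, (-1) ^ (m+1) * q ^ (tri (m+1) + k * (m+1)) / qPoch q (m+1) := by
    unfold gg
    rw [Summable.tsum_eq_zero_add hs, h0]
    ring
  rw [hsplit]
  have hbd : ∀ m : ℕ, |(-1 : ℝ) ^ (m+1) * q ^ (tri (m+1) + k * (m+1)) / qPoch q (m+1)|
      ≤ (B q * |q| ^ (k + 1)) * |q| ^ m := by
    intro m
    have hle : k + 1 + m ≤ tri (m+1) + k * (m+1) := by
      have := le_tri (m+1); nlinarith
    have h1 := term_abs_le hq (m+1) (tri (m+1) + k * (m+1)) (k+1+m) hle ((-1)^(m+1)) (by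
      rw [abs_pow, abs_neg, abs_one, one_pow])
    calc |(-1 : ℝ) ^ (m+1) * q ^ (tri (m+1) + k * (m+1)) / qPoch q (m+1)|
        ≤ B q * |q| ^ (k + 1 + m) := h1
      _ = B q * |q| ^ (k + 1) * |q| ^ m := by rw [pow_add]; ring
  have := tsum_abs_le hq (c := B q * |q| ^ (k + 1)) (by have := B_pos q; positivity) hbd
  calc |∑' m : ℕ, (-1) ^ (m+1) * q ^ (tri (m+1) + k * (m+1)) / qPoch q (m+1)|
      ≤ (B q * |q| ^ (k + 1)) / (1 - |q|) := this
    _ = B q * |q| ^ (k + 1) / (1 - |q|) := by ring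


lemma ff_sub_one (hq : |q| < 1) (k : ℕ) :
    |ff q k - 1| ≤ B q * |q| ^ (k + 1) / (1 - |q|) := by
  have hs := summable_v hq k
  have h0 : q ^ ((k + 1) * 0) / qPoch q 0 = 1 := by simp [qPoch]
  have hsplit : ff q k - 1 = ∑' n : ℕ, q ^ ((k + 1) * (n + 1)) / qPoch q (n + 1) := by
    unfold ff
    rw [Summable.tsum_eq_zero_add hs, h0]
    ring
  rw [hsplit]
  have hbd : ∀ n : ℕ, |q ^ ((k + 1) * (n + 1)) / qPoch q (n + 1)|
      ≤ (B q * |q| ^ (k + 1)) * |q| ^ n := by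
    intro n
    have hle : k + 1 + n ≤ (k + 1) * (n + 1) := by nlinarith
    have h1 := term_abs_le hq (n + 1) ((k + 1) * (n + 1)) (k + 1 + n) hle 1 abs_one
    rw [one_mul] at h1
    calc |q ^ ((k + 1) * (n + 1)) / qPoch q (n + 1)|
        ≤ B q * |q| ^ (k + 1 + n) := h1
      _ = B q * |q| ^ (k + 1) * |q| ^ n := by rw [pow_add]; ring
  have := tsum_abs_le hq (c := B q * |q| ^ (k + 1)) (by have := B_pos q; positivity) hbd
  calc |∑' n : ℕ, q ^ ((k + 1) * (n + 1)) / qPoch q (n + 1)|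
      ≤ (B q * |q| ^ (k + 1)) / (1 - |q|) := this
    _ = B q * |q| ^ (k + 1) / (1 - |q|) := by ring

lemma tendsto_of_sub_one (hq : |q| < 1) {h : ℕ → ℝ}
    (hb : ∀ k, |h k - 1| ≤ B q * |q| ^ (k + 1) / (1 - |q|)) :
    Filter.Tendsto h Filter.atTop (nhds 1) := by
  have h1 : Filter.Tendsto (fun k : ℕ => h k - 1) Filter.atTop (nhds 0) := by
    rw [tendsto_zero_iff_norm_tendsto_zero]
    simp only [Real.norm_eq_abs]
    apply squeeze_zero (g := fun k => B q * |q| ^ (k + 1) / (1 - |q|))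
        (fun k => abs_nonneg _) (fun k => hb k) ?_
    · have : Filter.Tendsto (fun k : ℕ => |q| ^ k) Filter.atTop (nhds 0) :=
        tendsto_pow_atTop_nhds_zero_of_lt_one (abs_nonneg q) hq
      have h2 := ((this.const_mul (B q * |q|)).div_const (1 - |q|))
      simp only [mul_zero, zero_div] at h2
      convert h2 using 2 with k
      rw [pow_succ]
      ring
  have := h1.add_const 1
  simpa using this

lemma gg_tendsto (hq : |q| < 1) : Filter.Tendsto (gg q) Filter.atTop (nhds 1) :=
  tendsto_of_sub_one hq (gg_sub_one hq)

lemma ff_tendsto (hq : |q| < 1) : Filter.Tendsto (ff q) Filter.atTop (nhds 1) :=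
  tendsto_of_sub_one hq (ff_sub_one hq)


lemma gg_rec (hq : |q| < 1) (k : ℕ) : gg q k = (1 - q ^ (k + 1)) * gg q (k + 1) := by
  have hsk := summable_u hq k
  have hsk1 := summable_u hq (k + 1)
  have hD : ∀ m : ℕ,
      ((-1) ^ (m+1) * q ^ (tri (m+1) + k * (m+1)) / qPoch q (m+1)
        - (-1) ^ (m+1) * q ^ (tri (m+1) + (k+1) * (m+1)) / qPoch q (m+1))
      = (-q ^ (k+1)) * ((-1) ^ m * q ^ (tri m + (k+1) * m) / qPoch q m) := by
    intro m
    have hne : (1 - q ^ (m+1)) ≠ 0 := ne_of_gt (one_sub_pos hq m)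
    have hpne : qPoch q m ≠ 0 := ne_of_gt (qPoch_pos hq m)
    have hps : qPoch q (m+1) = qPoch q m * (1 - q ^ (m+1)) := Finset.prod_range_succ _ _
    have e1 : tri (m+1) + k * (m+1) = (tri m + (k+1) * m) + (k+1) := by rw [tri_succ]; ring
    have e2 : tri (m+1) + (k+1) * (m+1) = ((tri m + (k+1) * m) + (k+1)) + (m+1) := by
      rw [tri_succ]; ring
    rw [hps, e1, e2, pow_add, pow_add, pow_add, pow_succ]
    field_simp
    ring
  have hsub : gg q k - gg q (k+1) = -q ^ (k+1) * gg q (k+1) := by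
    unfold gg
    rw [← Summable.tsum_sub hsk hsk1]
    have hDsum : Summable (fun m : ℕ =>
        (-1) ^ m * q ^ (tri m + k * m) / qPoch q m
          - (-1) ^ m * q ^ (tri m + (k+1) * m) / qPoch q m) := hsk.sub hsk1
    rw [Summable.tsum_eq_zero_add hDsum]
    have h0 : ((-1:ℝ) ^ 0 * q ^ (tri 0 + k * 0) / qPoch q 0
        - (-1) ^ 0 * q ^ (tri 0 + (k+1) * 0) / qPoch q 0) = 0 := by
      simp [tri, qPoch]
    rw [h0, zero_add]
    calc (∑' m : ℕ, ((-1) ^ (m+1) * q ^ (tri (m+1) + k * (m+1)) / qPoch q (m+1)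
            - (-1) ^ (m+1) * q ^ (tri (m+1) + (k+1) * (m+1)) / qPoch q (m+1)))
        = ∑' m : ℕ, (-q ^ (k+1)) * ((-1) ^ m * q ^ (tri m + (k+1) * m) / qPoch q m) := by
          exact tsum_congr hD
      _ = -q ^ (k+1) * gg q (k+1) := tsum_mul_left
  linarith [hsub]

lemma ff_rec (hq : |q| < 1) (k : ℕ) : ff q (k + 1) = (1 - q ^ (k + 1)) * ff q k := by
  have hsk := summable_v hq k
  have hsk1 := summable_v hq (k + 1)
  have hD : ∀ n : ℕ,
      (q ^ ((k+1) * (n+1)) / qPoch q (n+1) - q ^ ((k+1+1) * (n+1)) / qPoch q (n+1))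
      = q ^ (k+1) * (q ^ ((k+1) * n) / qPoch q n) := by
    intro n
    have hne : (1 - q ^ (n+1)) ≠ 0 := ne_of_gt (one_sub_pos hq n)
    have hpne : qPoch q n ≠ 0 := ne_of_gt (qPoch_pos hq n)
    have hps : qPoch q (n+1) = qPoch q n * (1 - q ^ (n+1)) := Finset.prod_range_succ _ _
    have e1 : (k+1) * (n+1) = ((k+1) * n) + (k+1) := by ring
    have e2 : (k+1+1) * (n+1) = (((k+1) * n) + (k+1)) + (n+1) := by ring
    have key : q ^ ((k+1) * n + (k+1)) - q ^ ((k+1) * n + (k+1) + (n+1))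
        = q ^ ((k+1) * n + (k+1)) * (1 - q ^ (n+1)) := by rw [pow_add]; ring
    rw [hps, e1, e2, div_sub_div_same, key, mul_div_mul_right _ _ hne, pow_add]
    ring
  have hsub : ff q k - ff q (k+1) = q ^ (k+1) * ff q k := by
    unfold ff
    rw [← Summable.tsum_sub hsk hsk1]
    have hDsum : Summable (fun n : ℕ =>
        q ^ ((k+1) * n) / qPoch q n - q ^ ((k+1+1) * n) / qPoch q n) := hsk.sub hsk1
    rw [Summable.tsum_eq_zero_add hDsum]
    have h0 : (q ^ ((k+1) * 0) / qPoch q 0 - q ^ ((k+1+1) * 0) / qPoch q 0 : ℝ) = 0 := by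
      simp [qPoch]
    rw [h0, zero_add]
    calc (∑' n : ℕ, (q ^ ((k+1) * (n+1)) / qPoch q (n+1)
            - q ^ ((k+1+1) * (n+1)) / qPoch q (n+1)))
        = ∑' n : ℕ, q ^ (k+1) * (q ^ ((k+1) * n) / qPoch q n) := tsum_congr hD
      _ = q ^ (k+1) * ff q k := tsum_mul_left
  linarith [hsub]


lemma fg_const (hq : |q| < 1) (k : ℕ) : ff q k * gg q k = ff q 0 * gg q 0 := by
  induction k with
  | zero => rfl
  | succ n ih =>
    rw [← ih, gg_rec hq n, ff_rec hq n]
    ring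

lemma fg_one (hq : |q| < 1) (k : ℕ) : ff q k * gg q k = 1 := by
  have hconst : (fun k : ℕ => ff q k * gg q k) = fun _ => ff q 0 * gg q 0 :=
    funext fun k => fg_const hq k
  have h1 : Filter.Tendsto (fun k : ℕ => ff q k * gg q k) Filter.atTop (nhds 1) := by
    have := (ff_tendsto hq).mul (gg_tendsto hq)
    simpa using this
  have h2 : Filter.Tendsto (fun k : ℕ => ff q k * gg q k) Filter.atTop
      (nhds (ff q 0 * gg q 0)) := by
    rw [hconst]; exact tendsto_const_nhds
  have := tendsto_nhds_unique h2 h1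
  rw [fg_const hq k, this]

lemma gg_ne (hq : |q| < 1) (k : ℕ) : gg q k ≠ 0 :=
  right_ne_zero_of_mul (a := ff q k) (by rw [fg_one hq k]; exact one_ne_zero)

lemma g0_eq (hq : |q| < 1) (k : ℕ) : gg q 0 = qPoch q k * gg q k := by
  induction k with
  | zero => simp [qPoch]
  | succ n ih =>
    rw [ih, gg_rec hq n, show qPoch q (n+1) = qPoch q n * (1 - q ^ (n+1)) from
      Finset.prod_range_succ _ _]
    ring

lemma tprod_eq (hq : |q| < 1) : (∏' j : ℕ, (1 - q ^ (j + 1))) = gg q 0 := by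
  have hlog : Summable (fun j : ℕ => Real.log (1 - q ^ (j + 1))) := by
    apply summable_of_term_le hq (c := |q| / (1 - |q|))
    intro j
    have h1 := log_bound hq (x := q ^ (j + 1)) (by
      rw [abs_pow]
      calc |q| ^ (j + 1) ≤ |q| ^ 1 := pow_le_pow_of_le_one (abs_nonneg q) hq.le (by omega)
        _ = |q| := pow_one _)
    calc |Real.log (1 - q ^ (j + 1))| ≤ |q ^ (j + 1)| / (1 - |q|) := h1
      _ = |q| / (1 - |q|) * |q| ^ j := by
          rw [abs_pow, pow_succ]
          ring
  have hm : Multipliable (fun j : ℕ => 1 - q ^ (j + 1)) := by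
    exact Real.multipliable_of_summable_log (fun j => one_sub_pos hq j) hlog
  have h1 : Filter.Tendsto (fun n : ℕ => ∏ j ∈ Finset.range n, (1 - q ^ (j + 1)))
      Filter.atTop (nhds (∏' j : ℕ, (1 - q ^ (j + 1)))) := hm.hasProd.tendsto_prod_nat
  have h2 : Filter.Tendsto (fun n : ℕ => qPoch q n) Filter.atTop (nhds (gg q 0)) := by
    have heq : (fun n : ℕ => qPoch q n) = fun n => gg q 0 / gg q n := by
      funext n
      rw [g0_eq hq n, mul_div_assoc, div_self (gg_ne hq n), mul_one]
    rw [heq]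
    have := Filter.Tendsto.div (tendsto_const_nhds (x := gg q 0)) (gg_tendsto hq) one_ne_zero
    rw [div_one] at this; exact this
  exact tendsto_nhds_unique h1 h2

lemma gg_eq_div (hq : |q| < 1) (k : ℕ) : gg q k = gg q 0 / qPoch q k := by
  have hp : qPoch q k ≠ 0 := ne_of_gt (qPoch_pos hq k)
  rw [g0_eq hq k]
  field_simp


lemma gg_abs (hq : |q| < 1) (k : ℕ) : |gg q k| ≤ B q / (1 - |q|) := by
  unfold gg
  apply tsum_abs_le hq (B_pos q).le
  intro m
  exact term_abs_le hq m _ m (le_trans (le_tri m) (Nat.le_add_right _ _)) _ (by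
    rw [abs_pow, abs_neg, abs_one, one_pow])

/-- the double-sum term -/
noncomputable def F (q : ℝ) (k m : ℕ) : ℝ :=
  (q ^ k * gg q k) * ((-1) ^ m * q ^ (tri m + k * m) / qPoch q m)

lemma F_abs_le (hq : |q| < 1) (k m : ℕ) :
    |F q k m| ≤ (B q / (1 - |q|) * B q) * (|q| ^ k * |q| ^ m) := by
  have h1 : |q ^ k * gg q k| ≤ |q| ^ k * (B q / (1 - |q|)) := by
    rw [abs_mul, abs_pow]
    exact mul_le_mul_of_nonneg_left (gg_abs hq k) (by positivity)
  have h2 : |(-1 : ℝ) ^ m * q ^ (tri m + k * m) / qPoch q m| ≤ B q * |q| ^ m :=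
    term_abs_le hq m _ m (le_trans (le_tri m) (Nat.le_add_right _ _)) _ (by
      rw [abs_pow, abs_neg, abs_one, one_pow])
  calc |F q k m| = |q ^ k * gg q k| * |(-1 : ℝ) ^ m * q ^ (tri m + k * m) / qPoch q m| := by
        rw [F, abs_mul]
    _ ≤ (|q| ^ k * (B q / (1 - |q|))) * (B q * |q| ^ m) := by
        have h1q : (0:ℝ) < 1 - |q| := by linarith
        have hb := B_pos q
        apply mul_le_mul h1 h2 (abs_nonneg _) (by positivity)
    _ = (B q / (1 - |q|) * B q) * (|q| ^ k * |q| ^ m) := by ring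

lemma F_summable (hq : |q| < 1) : Summable (Function.uncurry (F q)) := by
  apply Summable.of_norm
  have hgeo : Summable (fun n : ℕ => |q| ^ n) :=
    summable_geometric_of_lt_one (abs_nonneg q) hq
  have hmaj : Summable (fun p : ℕ × ℕ =>
      (B q / (1 - |q|) * B q) * (|q| ^ p.1 * |q| ^ p.2)) :=
    ((hgeo.mul_of_nonneg hgeo (fun n => by positivity) (fun n => by positivity))).mul_left _
  apply Summable.of_nonneg_of_le (fun p => norm_nonneg _) _ hmaj
  intro p
  rw [Real.norm_eq_abs]
  exact F_abs_le hq p.1 p.2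

lemma F_summable_k (hq : |q| < 1) (m : ℕ) : Summable (fun k => F q k m) := by
  apply summable_of_term_le hq (c := B q / (1 - |q|) * B q * |q| ^ m)
  intro k
  calc |F q k m| ≤ (B q / (1 - |q|) * B q) * (|q| ^ k * |q| ^ m) := F_abs_le hq k m
    _ = B q / (1 - |q|) * B q * |q| ^ m * |q| ^ k := by ring

lemma inner_eval (hq : |q| < 1) (m : ℕ) :
    ∑' k : ℕ, F q k m = (-1) ^ m * q ^ (tri m) := by
  have hpt : ∀ k : ℕ, F q k m
      = ((-1) ^ m * q ^ (tri m) / qPoch q m) * (gg q 0 * (q ^ ((m + 1) * k) / qPoch q k)) := by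
    intro k
    have e2 : (m + 1) * k = k + k * m := by ring
    have e3 : tri m + k * m = tri m + k * m := rfl
    rw [F, gg_eq_div hq k, e2, pow_add, pow_add]
    have hp : qPoch q k ≠ 0 := ne_of_gt (qPoch_pos hq k)
    have hm : qPoch q m ≠ 0 := ne_of_gt (qPoch_pos hq m)
    field_simp
  calc ∑' k : ℕ, F q k m
      = ∑' k : ℕ, ((-1) ^ m * q ^ (tri m) / qPoch q m)
          * (gg q 0 * (q ^ ((m + 1) * k) / qPoch q k)) := tsum_congr hpt
    _ = ((-1) ^ m * q ^ (tri m) / qPoch q m)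
          * ∑' k : ℕ, gg q 0 * (q ^ ((m + 1) * k) / qPoch q k) := tsum_mul_left
    _ = ((-1) ^ m * q ^ (tri m) / qPoch q m) * (gg q 0 * ff q m) := by
        rw [tsum_mul_left]; rfl
    _ = ((-1) ^ m * q ^ (tri m) / qPoch q m) * qPoch q m := by
        rw [g0_eq hq m, mul_assoc, mul_comm (gg q m) (ff q m), fg_one hq m, mul_one]
    _ = (-1) ^ m * q ^ (tri m) := div_mul_cancel₀ _ (ne_of_gt (qPoch_pos hq m))

end FTaux

open FTaux in
theorem false_theta_eq' (q : ℝ) (hq : |q| < 1) :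
    (∑' k : ℕ, (-1 : ℝ) ^ k * q ^ (k * (k + 1) / 2))
      = (∏' j : ℕ, (1 - q ^ (j + 1))) ^ 2 * ∑' k : ℕ, q ^ k / (qPoch q k) ^ 2 := by
  have h1 : (∏' j : ℕ, (1 - q ^ (j + 1))) ^ 2 * ∑' k : ℕ, q ^ k / (qPoch q k) ^ 2
      = ∑' k : ℕ, ∑' m : ℕ, F q k m := by
    rw [tprod_eq hq, ← tsum_mul_left]
    apply tsum_congr
    intro k
    have hterm : gg q 0 ^ 2 * (q ^ k / qPoch q k ^ 2) = (q ^ k * gg q k) * gg q k := by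
      rw [gg_eq_div hq k]
      have hp : qPoch q k ≠ 0 := ne_of_gt (qPoch_pos hq k)
      field_simp
    rw [hterm]
    unfold gg F
    exact tsum_mul_left.symm
  have h2 : ∑' k : ℕ, ∑' m : ℕ, F q k m = ∑' m : ℕ, ∑' k : ℕ, F q k m :=
    (Summable.tsum_comm (F_summable hq)).symm
  have h3 : ∑' m : ℕ, ∑' k : ℕ, F q k m = ∑' m : ℕ, (-1 : ℝ) ^ m * q ^ (m * (m + 1) / 2) := by
    apply tsum_congr
    intro m
    rw [inner_eval hq m]
    rfl
  rw [h1, h2, h3]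
end

section
/- For the case k=1, the identity (q;q)_∞ · ∑_{i=0}^∞ q^i/(q;q)_i² = ∑_{i=0}^∞ q^{i+i²}/((q;q)_i)² holds for |q|<1. -/
section basic
variable {q : ℝ} (hq : |q| < 1)
include hq

lemma abs_pow_le (n : ℕ) : |q ^ (n + 1)| ≤ |q| := by
  rw [abs_pow]
  exact pow_le_of_le_one (abs_nonneg q) hq.le (Nat.succ_ne_zero n)

lemma one_sub_pow_pos (n : ℕ) : 0 < 1 - q ^ (n + 1) := by
  have h1 : q ^ (n + 1) ≤ |q ^ (n + 1)| := le_abs_self _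
  have h2 := abs_pow_le hq n
  linarith

lemma qPoch_pos (n : ℕ) : 0 < qPoch q n :=
  Finset.prod_pos fun j _ => one_sub_pow_pos hq j

lemma qPoch_ne (n : ℕ) : qPoch q n ≠ 0 := (qPoch_pos hq n).ne'

omit hq in
lemma qPoch_succ (n : ℕ) : qPoch q (n + 1) = qPoch q n * (1 - q ^ (n + 1)) :=
  Finset.prod_range_succ _ n

end basic

section finitepart
variable {q : ℝ} (hq : |q| < 1)
include hq

/-- term of the `J` family -/
noncomputable def qT (q : ℝ) (k n N : ℕ) : ℝ :=
  q ^ (n ^ 2 + k * n) / (qPoch q n * qPoch q (N - n) * qPoch q (n + k))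

/-- `J k N = ∑_{n ≤ N} q^{n²+kn}/((q;q)_n (q;q)_{N-n} (q;q)_{n+k})` -/
noncomputable def qJ (q : ℝ) (k N : ℕ) : ℝ := ∑ n ∈ Finset.range (N + 1), qT q k n N

lemma qJ_rec (k N : ℕ) :
    (1 - q ^ (N + 1)) * qJ q k (N + 1) = qJ q k N + q ^ (N + 1 + k) * qJ q (k + 1) N := by
  have hA : ∑ n ∈ Finset.range (N + 2), (1 - q ^ (N + 1 - n)) * qT q k n (N + 1) = qJ q k N := by
    rw [Finset.sum_range_succ]
    have h1 : (1 - q ^ (N + 1 - (N + 1))) * qT q k (N + 1) (N + 1) = 0 := by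
      simp
    rw [h1, add_zero, qJ]
    refine Finset.sum_congr rfl fun n hn => ?_
    have hn' : n ≤ N := Nat.lt_succ_iff.mp (Finset.mem_range.mp hn)
    have hsub : N + 1 - n = (N - n) + 1 := by omega
    rw [qT, qT, hsub, qPoch_succ]
    have hne1 : qPoch q (N - n) ≠ 0 := qPoch_ne hq _
    have hne2 : (1 : ℝ) - q ^ (N - n + 1) ≠ 0 := (one_sub_pow_pos hq _).ne'
    have hne3 : qPoch q n ≠ 0 := qPoch_ne hq _
    have hne4 : qPoch q (n + k) ≠ 0 := qPoch_ne hq _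
    field_simp
  have hB : ∑ n ∈ Finset.range (N + 2), (q ^ (N + 1 - n) * (1 - q ^ n)) * qT q k n (N + 1)
      = q ^ (N + 1 + k) * qJ q (k + 1) N := by
    rw [Finset.sum_range_succ', qJ, Finset.mul_sum]
    have h0 : (q ^ (N + 1 - 0) * (1 - q ^ 0)) * qT q k 0 (N + 1) = 0 := by simp
    rw [h0, add_zero]
    refine Finset.sum_congr rfl fun j hj => ?_
    have hj' : j ≤ N := Nat.lt_succ_iff.mp (Finset.mem_range.mp hj)
    obtain ⟨d, rfl⟩ : ∃ d, N = j + d := ⟨N - j, by omega⟩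
    have hsub1 : j + d + 1 - (j + 1) = d := by omega
    have hsub2 : j + d + 1 - (j + 1) = (j + d) - j := by omega
    rw [qT, qT, hsub1]
    have hpow : qPoch q (j + 1) = qPoch q j * (1 - q ^ (j + 1)) := qPoch_succ j
    have hsub3 : (j + d) - j = d := by omega
    rw [hsub3, hpow]
    have hne1 : qPoch q j ≠ 0 := qPoch_ne hq _
    have hne2 : (1 : ℝ) - q ^ (j + 1) ≠ 0 := (one_sub_pow_pos hq _).ne'
    have hne3 : qPoch q d ≠ 0 := qPoch_ne hq _
    have hne4 : qPoch q (j + 1 + k) ≠ 0 := qPoch_ne hq _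
    have hj1k : j + (k + 1) = j + 1 + k := by omega
    rw [hj1k]
    have hexp : q ^ d * q ^ ((j + 1) ^ 2 + k * (j + 1))
        = q ^ (j + d + 1 + k) * q ^ (j ^ 2 + (k + 1) * j) := by
      rw [← pow_add, ← pow_add]
      congr 1
      ring
    field_simp
    linear_combination (1 - q ^ (j + 1)) * (qPoch q j * qPoch q d * qPoch q (j + 1 + k)) * hexp
  calc (1 - q ^ (N + 1)) * qJ q k (N + 1)
      = ∑ n ∈ Finset.range (N + 2), (1 - q ^ (N + 1)) * qT q k n (N + 1) := by
        rw [qJ, Finset.mul_sum]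
    _ = ∑ n ∈ Finset.range (N + 2),
          ((1 - q ^ (N + 1 - n)) * qT q k n (N + 1)
            + (q ^ (N + 1 - n) * (1 - q ^ n)) * qT q k n (N + 1)) := by
        refine Finset.sum_congr rfl fun n hn => ?_
        have hn' : n ≤ N + 1 := Nat.lt_succ_iff.mp (Finset.mem_range.mp hn)
        have : q ^ (N + 1 - n) * q ^ n = q ^ (N + 1) := by
          rw [← pow_add]; congr 1; omega
        linear_combination qT q k n (N + 1) * this
    _ = qJ q k N + q ^ (N + 1 + k) * qJ q (k + 1) N := by
        rw [Finset.sum_add_distrib, hA, hB]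

lemma qJ_eq : ∀ N k, qJ q k N = 1 / (qPoch q N * qPoch q (N + k)) := by
  intro N
  induction N with
  | zero =>
    intro k
    simp [qJ, qT, qPoch]
  | succ N ih =>
    intro k
    have hrec := qJ_rec hq k N
    rw [ih k, ih (k + 1)] at hrec
    have hne1 : qPoch q N ≠ 0 := qPoch_ne hq _
    have hne2 : qPoch q (N + k) ≠ 0 := qPoch_ne hq _
    have hne3 : qPoch q (N + 1 + k) ≠ 0 := qPoch_ne hq _
    have hne4 : (1 : ℝ) - q ^ (N + 1) ≠ 0 := (one_sub_pow_pos hq _).ne'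
    have h1 : qPoch q (N + 1) = qPoch q N * (1 - q ^ (N + 1)) := qPoch_succ N
    have h2 : qPoch q (N + 1 + k) = qPoch q (N + k) * (1 - q ^ (N + k + 1)) := by
      have : N + 1 + k = (N + k) + 1 := by omega
      rw [this, qPoch_succ]
    have hne6 : qPoch q (N + 1) ≠ 0 := qPoch_ne hq _
    have heq : qJ q k (N + 1)
        = ((1 - q ^ (N + 1))⁻¹) * (1 / (qPoch q N * qPoch q (N + k))
            + q ^ (N + 1 + k) * (1 / (qPoch q N * qPoch q (N + (k + 1))))) := by
      rw [← hrec]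
      field_simp
    rw [heq]
    have hNk1 : N + (k + 1) = N + k + 1 := by omega
    have hNk2 : N + 1 + k = N + k + 1 := by omega
    rw [hNk1, qPoch_succ, h1, hNk2, qPoch_succ]
    have hne7 : (1 : ℝ) - q ^ (N + k + 1) ≠ 0 := (one_sub_pow_pos hq _).ne'
    field_simp
    ring

end finitepart

section h1part
variable {q : ℝ} (hq : |q| < 1)
include hq

noncomputable def qH1 (q : ℝ) (N : ℕ) : ℝ :=
  ∑ n ∈ Finset.range (N + 1), q ^ (n ^ 2 + n) / ((qPoch q n) ^ 2 * qPoch q (N - n))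

omit hq in
lemma qT_zero (n N : ℕ) : qT q 0 n N = q ^ (n ^ 2) / ((qPoch q n) ^ 2 * qPoch q (N - n)) := by
  rw [qT]
  congr 1
  · congr 1; omega
  · rw [Nat.add_zero]; ring

lemma qH1_rec (N : ℕ) : qH1 q (N + 1) = qH1 q N + q ^ (N + 1) * qJ q 0 (N + 1) := by
  have key : ∑ n ∈ Finset.range (N + 2),
      (q ^ (n ^ 2 + n) / ((qPoch q n) ^ 2 * qPoch q (N + 1 - n))
        - q ^ (N + 1) * qT q 0 n (N + 1)) = qH1 q N := by
    rw [Finset.sum_range_succ]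
    have hlast : q ^ ((N+1) ^ 2 + (N+1)) / ((qPoch q (N+1)) ^ 2 * qPoch q (N + 1 - (N+1)))
        - q ^ (N + 1) * qT q 0 (N+1) (N + 1) = 0 := by
      rw [qT_zero]
      have h0 : N + 1 - (N + 1) = 0 := by omega
      rw [h0]
      have hp : q ^ ((N+1) ^ 2 + (N+1)) = q ^ (N + 1) * q ^ ((N+1) ^ 2) := by
        rw [← pow_add]; congr 1; ring
      rw [hp, mul_div_assoc, sub_self]
    rw [hlast, add_zero, qH1]
    refine Finset.sum_congr rfl fun n hn => ?_
    have hn' : n ≤ N := Nat.lt_succ_iff.mp (Finset.mem_range.mp hn)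
    rw [qT_zero]
    have hsub : N + 1 - n = (N - n) + 1 := by omega
    rw [hsub, qPoch_succ]
    have hne1 : qPoch q n ≠ 0 := qPoch_ne hq _
    have hne2 : qPoch q (N - n) ≠ 0 := qPoch_ne hq _
    have hne3 : (1 : ℝ) - q ^ (N - n + 1) ≠ 0 := (one_sub_pow_pos hq _).ne'
    have hexp : q ^ (n ^ 2 + n) * q ^ (N - n + 1) = q ^ (N + 1) * q ^ (n ^ 2) := by
      rw [← pow_add, ← pow_add]
      congr 1
      omega
    field_simp
    linear_combination hexp
  have expand : qH1 q (N + 1)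
      = (∑ n ∈ Finset.range (N + 2),
          (q ^ (n ^ 2 + n) / ((qPoch q n) ^ 2 * qPoch q (N + 1 - n))
            - q ^ (N + 1) * qT q 0 n (N + 1)))
        + q ^ (N + 1) * qJ q 0 (N + 1) := by
    rw [Finset.sum_sub_distrib, qH1, qJ, Finset.mul_sum]
    ring
  rw [expand, key]

lemma qH1_eq (N : ℕ) : qH1 q N = ∑ n ∈ Finset.range (N + 1), q ^ n / (qPoch q n) ^ 2 := by
  induction N with
  | zero => simp [qH1, qPoch]
  | succ N ih =>
    rw [qH1_rec hq, ih, qJ_eq hq,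
      Finset.sum_range_succ (fun n => q ^ n / (qPoch q n) ^ 2) (N + 1)]
    congr 1
    rw [Nat.add_zero, sq]
    ring

end h1part

section analytic
variable {q : ℝ} (hq : |q| < 1)

lemma prod_one_sub_ge (a : ℕ → ℝ) (h0 : ∀ i, 0 ≤ a i) (h1 : ∀ i, a i ≤ 1) :
    ∀ k, 1 - ∑ i ∈ Finset.range k, a i ≤ ∏ i ∈ Finset.range k, (1 - a i) := by
  intro k
  induction k with
  | zero => simp
  | succ k ih =>
    rw [Finset.prod_range_succ, Finset.sum_range_succ]
    have hk : 0 ≤ 1 - a k := by linarith [h1 k]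
    have h2 : (1 - ∑ i ∈ Finset.range k, a i) * (1 - a k)
        ≤ (∏ i ∈ Finset.range k, (1 - a i)) * (1 - a k) :=
      mul_le_mul_of_nonneg_right ih hk
    have h3 : 0 ≤ (∑ i ∈ Finset.range k, a i) * a k :=
      mul_nonneg (Finset.sum_nonneg fun i _ => h0 i) (h0 k)
    nlinarith
include hq

lemma qPoch_lower : ∃ c : ℝ, 0 < c ∧ ∀ n, c ≤ qPoch q n := by
  have h0 : (0:ℝ) ≤ |q| := abs_nonneg q
  have htend : Filter.Tendsto (fun m : ℕ => |q| ^ m) Filter.atTop (nhds 0) :=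
    tendsto_pow_atTop_nhds_zero_of_lt_one h0 hq
  have hhalf : (0:ℝ) < (1 - |q|) * (1 - |q|) / 2 := by nlinarith
  obtain ⟨m, hm⟩ : ∃ m : ℕ, |q| ^ (m + 1) ≤ (1 - |q|) * (1 - |q|) / 2 := by
    have := (htend.eventually (eventually_le_nhds hhalf)).exists
    obtain ⟨m, hm⟩ := this
    exact ⟨m, by calc |q| ^ (m + 1) ≤ |q| ^ m := by
                        exact pow_le_pow_of_le_one h0 hq.le (by omega)
                      _ ≤ _ := hm⟩
  -- tail products are at least 1/2
  have htail : ∀ k : ℕ, (1:ℝ)/2 ≤ ∏ i ∈ Finset.range k, (1 - q ^ (m + i + 1)) := by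
    intro k
    have hstep1 : ∏ i ∈ Finset.range k, (1 - |q| ^ (m + i + 1))
        ≤ ∏ i ∈ Finset.range k, (1 - q ^ (m + i + 1)) := by
      refine Finset.prod_le_prod (fun i _ => ?_) (fun i _ => ?_)
      · have : |q| ^ (m + i + 1) ≤ |q| := by
          exact pow_le_of_le_one h0 hq.le (by omega)
        linarith
      · have : q ^ (m + i + 1) ≤ |q| ^ (m + i + 1) := by
          rw [← abs_pow]; exact le_abs_self _
        linarith
    have hsum : ∑ i ∈ Finset.range k, |q| ^ (m + i + 1) ≤ 1/2 := by
      have heach : ∀ i ∈ Finset.range k, |q| ^ (m + i + 1) = |q| ^ (m + 1) * |q| ^ i := by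
        intro i _
        rw [← pow_add]
        congr 1
        omega
      rw [Finset.sum_congr rfl heach, ← Finset.mul_sum]
      have hgeom : ∑ i ∈ Finset.range k, |q| ^ i ≤ (1 - |q|)⁻¹ := by
        have hs := summable_geometric_of_lt_one h0 hq
        calc ∑ i ∈ Finset.range k, |q| ^ i ≤ ∑' i : ℕ, |q| ^ i :=
              Summable.sum_le_tsum _ (fun i _ => by positivity) hs
          _ = (1 - |q|)⁻¹ := tsum_geometric_of_lt_one h0 hq
      calc |q| ^ (m + 1) * ∑ i ∈ Finset.range k, |q| ^ i
          ≤ ((1 - |q|) * (1 - |q|) / 2) * (1 - |q|)⁻¹ := by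
            refine mul_le_mul hm hgeom (by positivity) (by positivity)
        _ = (1 - |q|) / 2 := by
            have hne : (1:ℝ) - |q| ≠ 0 := by linarith
            field_simp
        _ ≤ 1/2 := by nlinarith
    have hbound := prod_one_sub_ge (fun i => |q| ^ (m + i + 1))
      (fun i => by positivity)
      (fun i => by
        have : |q| ^ (m + i + 1) ≤ |q| := pow_le_of_le_one h0 hq.le (by omega)
        linarith) k
    calc (1:ℝ)/2 ≤ 1 - ∑ i ∈ Finset.range k, |q| ^ (m + i + 1) := by linarith
      _ ≤ ∏ i ∈ Finset.range k, (1 - |q| ^ (m + i + 1)) := hbound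
      _ ≤ _ := hstep1
  -- min over initial segment
  set c0 : ℝ := (Finset.range (m + 1)).inf' Finset.nonempty_range_add_one
      (fun i => qPoch q i) with hc0
  have hc0pos : 0 < c0 := by
    rw [hc0, Finset.lt_inf'_iff]
    exact fun i _ => qPoch_pos hq i
  refine ⟨c0 / 2, by positivity, fun n => ?_⟩
  by_cases hn : n ≤ m
  · have : c0 ≤ qPoch q n :=
      Finset.inf'_le _ (Finset.mem_range.mpr (by omega))
    linarith
  · push_neg at hn
    obtain ⟨k, rfl⟩ : ∃ k, n = m + k := ⟨n - m, by omega⟩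
    have hsplit : qPoch q (m + k) = qPoch q m * ∏ i ∈ Finset.range k, (1 - q ^ (m + i + 1)) := by
      rw [qPoch, Finset.prod_range_add]
      rfl
    have hm' : c0 ≤ qPoch q m := Finset.inf'_le _ (Finset.mem_range.mpr (by omega))
    rw [hsplit]
    calc c0 / 2 ≤ qPoch q m * (1/2) := by linarith
      _ ≤ qPoch q m * ∏ i ∈ Finset.range k, (1 - q ^ (m + i + 1)) :=
          mul_le_mul_of_nonneg_left (htail k) (qPoch_pos hq m).le
end analytic

section prodpart
variable {q : ℝ} (hq : |q| < 1)
include hq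

lemma summable_log_one_sub : Summable (fun n : ℕ => Real.log (1 - q ^ (n + 1))) := by
  have h0 : (0:ℝ) ≤ |q| := abs_nonneg q
  have hqpos : (0:ℝ) < 1 - |q| := by linarith
  refine Summable.of_norm_bounded (g := fun n => (1 - |q|)⁻¹ * (|q| ^ n * |q|)) ?_ ?_
  · exact ((summable_geometric_of_lt_one h0 hq).mul_right |q|).mul_left _
  · intro n
    set x := q ^ (n + 1) with hx
    have hxle : |x| ≤ |q| := abs_pow_le hq n
    have hpos : 0 < 1 - x := one_sub_pow_pos hq n
    have hxabs : x ≤ |x| := le_abs_self x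
    have hub : Real.log (1 - x) ≤ |x| := by
      have := Real.log_le_sub_one_of_pos hpos
      have : Real.log (1 - x) ≤ -x := by linarith
      linarith [neg_le_abs x]
    have hlb : -Real.log (1 - x) ≤ |x| / (1 - |q|) := by
      have h1 : Real.log (1 - x)⁻¹ ≤ (1 - x)⁻¹ - 1 :=
        Real.log_le_sub_one_of_pos (inv_pos.mpr hpos)
      rw [Real.log_inv] at h1
      have h2 : (1 - x)⁻¹ - 1 = x / (1 - x) := by field_simp; ring
      have h3 : x / (1 - x) ≤ |x| / (1 - |q|) := by
        rw [div_le_div_iff₀ hpos hqpos]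
        nlinarith [abs_nonneg x]
      linarith
    have habs : |Real.log (1 - x)| ≤ |x| / (1 - |q|) := by
      rw [abs_le]
      constructor
      · linarith
      · have : |x| ≤ |x| / (1 - |q|) := by
          rw [le_div_iff₀ hqpos]
          nlinarith [abs_nonneg x]
        linarith
    calc ‖Real.log (1 - x)‖ = |Real.log (1 - x)| := rfl
      _ ≤ |x| / (1 - |q|) := habs
      _ ≤ (1 - |q|)⁻¹ * (|q| ^ n * |q|) := by
        rw [div_eq_inv_mul]
        refine mul_le_mul_of_nonneg_left ?_ (by positivity)
        exact le_of_eq (by rw [hx, abs_pow, pow_succ])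

lemma hasProd_qPoch : HasProd (fun j : ℕ => 1 - q ^ (j + 1)) (∏' j : ℕ, (1 - q ^ (j + 1))) := by
  have h := (summable_log_one_sub hq).hasSum.rexp
  have hf : (Real.exp ∘ fun n : ℕ => Real.log (1 - q ^ (n + 1))) = fun n => 1 - q ^ (n + 1) :=
    funext fun n => Real.exp_log (one_sub_pow_pos hq n)
  rw [hf] at h
  exact h.multipliable.hasProd

end prodpart

open Filter in
theorem pretzel_identity_k_one (q : ℝ) (hq : |q| < 1) :
    (∏' j : ℕ, (1 - q ^ (j + 1))) * ∑' i : ℕ, q ^ i / (qPoch q i) ^ 2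
      = ∑' i : ℕ, q ^ (i + i ^ 2) / (qPoch q i) ^ 2 := by
  have h0 : (0:ℝ) ≤ |q| := abs_nonneg q
  obtain ⟨c, hcpos, hc⟩ := qPoch_lower hq
  set P : ℝ := ∏' j : ℕ, (1 - q ^ (j + 1)) with hPdef
  have hP : HasProd (fun j : ℕ => 1 - q ^ (j + 1)) P := hasProd_qPoch hq
  have hPl : Tendsto (fun M : ℕ => qPoch q M) atTop (nhds P) := by
    simpa [qPoch] using hP.tendsto_prod_nat
  have hPc : c ≤ P := ge_of_tendsto' hPl hc
  have hPpos : 0 < P := lt_of_lt_of_le hcpos hPc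
  have hpow_le : ∀ n e : ℕ, n ≤ e → |q| ^ e ≤ |q| ^ n :=
    fun n e hne => pow_le_pow_of_le_one h0 hq.le hne
  have hden : ∀ n : ℕ, c ^ 2 ≤ (qPoch q n) ^ 2 := by
    intro n
    have := hc n
    nlinarith
  have hS1 : Summable (fun i : ℕ => q ^ i / (qPoch q i) ^ 2) := by
    refine Summable.of_norm_bounded (g := fun n => |q| ^ n * (c ^ 2)⁻¹)
      ((summable_geometric_of_lt_one h0 hq).mul_right _) (fun n => ?_)
    show ‖q ^ n / (qPoch q n) ^ 2‖ ≤ |q| ^ n * (c ^ 2)⁻¹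
    rw [norm_div, ← div_eq_mul_inv]
    refine div_le_div₀ (by positivity) (le_of_eq ?_) (pow_pos hcpos 2) ?_
    · rw [Real.norm_eq_abs, abs_pow]
    · rw [Real.norm_eq_abs, abs_of_pos (pow_pos (qPoch_pos hq n) 2)]
      exact hden n
  have hGlim : Tendsto (fun M : ℕ => ∑ n ∈ Finset.range (M + 1), q ^ n / (qPoch q n) ^ 2)
      atTop (nhds (∑' i : ℕ, q ^ i / (qPoch q i) ^ 2)) :=
    hS1.hasSum.tendsto_sum_nat.comp (tendsto_add_atTop_nat 1)
  set f : ℕ → ℕ → ℝ := fun M n =>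
    if n < M + 1 then q ^ (n ^ 2 + n) / ((qPoch q n) ^ 2 * qPoch q (M - n)) else 0 with hfdef
  have hf_tsum : ∀ M, ∑' n : ℕ, f M n = qH1 q M := by
    intro M
    rw [tsum_eq_sum (s := Finset.range (M + 1))
      (fun b hb => if_neg (by simpa using hb)), qH1]
    exact Finset.sum_congr rfl fun n hn => if_pos (Finset.mem_range.mp hn)
  have hDCT : Tendsto (fun M : ℕ => ∑' n : ℕ, f M n) atTop
      (nhds (∑' n : ℕ, q ^ (n ^ 2 + n) / ((qPoch q n) ^ 2 * P))) := by
    refine tendsto_tsum_of_dominated_convergence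
      (bound := fun n => |q| ^ n * (c ^ 2 * c)⁻¹)
      (((summable_geometric_of_lt_one h0 hq).mul_right _)) (fun n => ?_) ?_
    · have h1 : Tendsto (fun M : ℕ => qPoch q (M - n)) atTop (nhds P) :=
        hPl.comp (tendsto_sub_atTop_nat n)
      have h2 : Tendsto (fun M : ℕ => q ^ (n ^ 2 + n) / ((qPoch q n) ^ 2 * qPoch q (M - n)))
          atTop (nhds (q ^ (n ^ 2 + n) / ((qPoch q n) ^ 2 * P))) := by
        refine Tendsto.div tendsto_const_nhds (tendsto_const_nhds.mul h1) ?_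
        exact (mul_pos (pow_pos (qPoch_pos hq n) 2) hPpos).ne'
      refine Filter.Tendsto.congr' ?_ h2
      filter_upwards [eventually_ge_atTop n] with M hM
      show _ = f M n
      rw [hfdef]
      exact (if_pos (by omega)).symm
    · refine Filter.Eventually.of_forall fun M n => ?_
      show ‖f M n‖ ≤ |q| ^ n * (c ^ 2 * c)⁻¹
      rw [hfdef]
      simp only
      by_cases hn : n < M + 1
      · rw [if_pos hn, norm_div, ← div_eq_mul_inv]
        refine div_le_div₀ (by positivity) ?_ (by positivity) ?_
        · rw [Real.norm_eq_abs, abs_pow]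
          exact hpow_le n _ (by nlinarith)
        · have hd : 0 < (qPoch q n) ^ 2 * qPoch q (M - n) := by
            have h3 := qPoch_pos hq n
            have h4 := qPoch_pos hq (M - n)
            positivity
          rw [Real.norm_eq_abs, abs_of_pos hd]
          exact mul_le_mul (hden n) (hc _) hcpos.le (by positivity)
      · rw [if_neg hn, norm_zero]
        positivity
  have hH1lim : Tendsto (fun M : ℕ => ∑ n ∈ Finset.range (M + 1), q ^ n / (qPoch q n) ^ 2)
      atTop (nhds (∑' n : ℕ, q ^ (n ^ 2 + n) / ((qPoch q n) ^ 2 * P))) := by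
    refine Filter.Tendsto.congr' ?_ hDCT
    exact Filter.Eventually.of_forall fun M => by
      show ∑' n : ℕ, f M n = _
      rw [hf_tsum M, qH1_eq hq M]
  have huniq : (∑' i : ℕ, q ^ i / (qPoch q i) ^ 2)
      = ∑' n : ℕ, q ^ (n ^ 2 + n) / ((qPoch q n) ^ 2 * P) :=
    tendsto_nhds_unique hGlim hH1lim
  rw [huniq]
  have hsplit : (∑' n : ℕ, q ^ (n ^ 2 + n) / ((qPoch q n) ^ 2 * P))
      = (∑' n : ℕ, q ^ (n ^ 2 + n) / (qPoch q n) ^ 2) * P⁻¹ := by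
    rw [← tsum_mul_right]
    exact tsum_congr fun n => by rw [← div_div, div_eq_mul_inv]
  rw [hsplit]
  have hfinal : (∑' n : ℕ, q ^ (n ^ 2 + n) / (qPoch q n) ^ 2)
      = ∑' i : ℕ, q ^ (i + i ^ 2) / (qPoch q i) ^ 2 :=
    tsum_congr fun n => by rw [Nat.add_comm]
  rw [hfinal]
  rw [← mul_assoc, mul_comm P, mul_assoc, mul_inv_cancel₀ hPpos.ne', mul_one]
end
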